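/- Composing the shift SSM with delay and a diagonal cumulative-sum SSM with gating solves associative recall: in the formal construction of Appendix C.1, for any sequence x from the language Λ ending in key k_i that has appeared earlier, the output of the constructed two-projections H3 layer at the final position is a positive multiple of the binary encoding of f_x(k_i), while all other heads output zero. -/

import Mathlib

open Finset

/-- The H3 construction solves associative recall on the language Λ: tokens 0–3 are keys and
4–7 are values; odd positions hold keys, even positions hold the value 4 + fmap(previous key),
and the final position N+1 holds a key i that appeared earlier at an odd position. The H3 layer
with per-head output O_t^{(h)} j = Q_t^{(h)} j · ∑_{τ≤t} (shifted K)_τ^{(h)} j · V_τ^{(h)} j,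
where Q routes key h to head h, the shift SSM delays K by one step, the diagonal SSM is a
cumulative sum, and V is the binary encoding of values, outputs at the final position a
positive multiple of the binary encoding of f_x(k_i) in head i, and zero in every other head. -/
theorem h3_solves_associative_recall
    (N : ℕ) (hN : Even N) (hNpos : 0 < N)
    (s : ℕ → Fin 8) (fmap : Fin 8 → Fin 4)
    (hkey : ∀ t, 1 ≤ t → t ≤ N + 1 → t % 2 = 1 → (s t : ℕ) < 4)
    (hval : ∀ i, 1 ≤ i → 2 * i ≤ N → (s (2 * i) : ℕ) = 4 + (fmap (s (2 * i - 1)) : ℕ))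
    (i : Fin 4) (hi : (s (N + 1) : ℕ) = (i : ℕ))
    (happ : ∃ t, t % 2 = 1 ∧ 1 ≤ t ∧ t ≤ N - 1 ∧ s t = s (N + 1))
    (enc : Fin 4 → Fin 2 → ℝ)
    (henc : ∀ v j, enc v j = if j = 0 then (((v : ℕ) / 2 : ℕ) : ℝ) else (((v : ℕ) % 2 : ℕ) : ℝ))
    (Q V O : ℕ → Fin 4 → Fin 2 → ℝ)
    (hQ : ∀ t h j, Q t h j = if (s t : ℕ) = (h : ℕ) then 1 else 0)
    (hV : ∀ t h j, V t h j =
      if hv : 4 ≤ (s t : ℕ) then enc ⟨(s t : ℕ) - 4, by have := (s t).isLt; omega⟩ j else 0)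
    (hO : ∀ t h j, O t h j =
      Q t h j * ∑ τ ∈ Finset.Icc 2 t,
        (if (s (τ - 1) : ℕ) = (h : ℕ) then 1 else 0) * V τ h j) :
    (∃ c : ℝ, 0 < c ∧ ∀ j, O (N + 1) i j = c * enc (fmap (s (N + 1))) j) ∧
    (∀ h : Fin 4, h ≠ i → ∀ j, O (N + 1) h j = 0) := by
  obtain ⟨N2, hN2⟩ := hN
  set S : Finset ℕ :=
    (Finset.Icc 2 (N + 1)).filter (fun τ => τ % 2 = 0 ∧ (s (τ - 1) : ℕ) = (i : ℕ)) with hS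
  constructor
  · refine ⟨(S.card : ℝ), ?_, ?_⟩
    · have hne : S.Nonempty := by
        obtain ⟨t, ht1, ht2, ht3, ht4⟩ := happ
        refine ⟨t + 1, ?_⟩
        simp only [hS, Finset.mem_filter, Finset.mem_Icc]
        have : (s (t + 1 - 1) : ℕ) = (i : ℕ) := by
          simpa [Nat.add_sub_cancel, ht4] using hi
        exact ⟨⟨by omega, by omega⟩, by omega, this⟩
      exact_mod_cast Finset.card_pos.mpr hne
    · intro j
      rw [hO, hQ]
      rw [if_pos hi, one_mul]
      have hterm : ∀ τ ∈ Finset.Icc 2 (N + 1),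
          (if (s (τ - 1) : ℕ) = (i : ℕ) then (1 : ℝ) else 0) * V τ i j
            = if τ % 2 = 0 ∧ (s (τ - 1) : ℕ) = (i : ℕ) then enc (fmap (s (N + 1))) j
              else 0 := by
        intro τ hτ
        rw [Finset.mem_Icc] at hτ
        by_cases hsi : (s (τ - 1) : ℕ) = (i : ℕ)
        · rw [if_pos hsi, one_mul]
          by_cases hpar : τ % 2 = 0
          · rw [if_pos ⟨hpar, hsi⟩]
            -- τ is even, 2 ≤ τ ≤ N
            have hτN : τ ≤ N := by omega
            have hτeq : τ = 2 * (τ / 2) := by omega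
            have hv := hval (τ / 2) (by omega) (by omega)
            rw [← hτeq] at hv
            have h4 : 4 ≤ (s τ : ℕ) := by omega
            rw [hV, dif_pos h4]
            have hfin : s (τ - 1) = s (N + 1) := Fin.ext (by rw [hsi, hi])
            have hval4 : (⟨(s τ : ℕ) - 4, by have := (s τ).isLt; omega⟩ : Fin 4)
                = fmap (s (N + 1)) := by
              apply Fin.ext
              simp only [hv, ← hfin]
              omega
            rw [hval4]
          · exfalso
            -- τ odd, τ - 1 even with 2 ≤ τ - 1 ≤ N, so s (τ-1) ≥ 4, contradiction
            have hτ3 : 3 ≤ τ := by omega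
            have hτeq : τ - 1 = 2 * ((τ - 1) / 2) := by omega
            have hv := hval ((τ - 1) / 2) (by omega) (by omega)
            rw [← hτeq] at hv
            have := (i : ℕ) |>.lt_irrefl
            omega
        · rw [if_neg hsi, zero_mul,
            if_neg (by intro hc; exact hsi hc.2)]
      rw [Finset.sum_congr rfl hterm, ← Finset.sum_filter, ← hS,
        Finset.sum_const, nsmul_eq_mul]
  · intro h hne j
    rw [hO, hQ, if_neg, zero_mul]
    intro hc
    exact hne (Fin.ext (by omega))
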